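/- Let p be a prime, G a finite p-group, k = ZMod p, kG the group algebra with Jacobson radical J, A a finite type, M the free monoid on A, ≤ an admissible linear order on M, and φ : FreeAlgebra k A →ₐ[k] kG a surjective k-algebra homomorphism with φ(x_a) ∈ J for every generator. Suppose N is such that φ(w) = 0 for every word w of length N. For each minimal tip w let ν(w) denote the unique k-linear combination of nontips whose image under φ equals φ(w). Then ker φ is generated, as a two-sided ideal of FreeAlgebra k A, by the set {w - ν(w) : w a minimal tip} together with the set of all words of length N. -/
import Mathlib


/-- The monomial in the free algebra corresponding to a word in the free monoid. -/
noncomputable def wordMonomial (k : Type*) [CommRing k] {A : Type*} (w : FreeMonoid A) :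
    FreeAlgebra k A :=
  FreeMonoid.lift (FreeAlgebra.ι k) w

/-- if all words of length `N` map to zero, then the relations ideal
`ker φ` is generated as a two-sided ideal by the Gröbner-basis elements `w - ν(w)`
(`w` a minimal tip) together with the words of length `N`. -/
theorem kernel_generated_by_groebner_basis
    (p : ℕ) (hp : p.Prime) (G : Type*) [Group G] [Fintype G] (hG : IsPGroup p G)
    (A : Type*) [Finite A]
    (J : Ideal (MonoidAlgebra (ZMod p) G))
    (hJ : J = (⊥ : Ideal (MonoidAlgebra (ZMod p) G)).jacobson)
    (φ : FreeAlgebra (ZMod p) A →ₐ[ZMod p] MonoidAlgebra (ZMod p) G)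
    (hsurj : Function.Surjective φ)
    (hrad : ∀ a : A, φ (FreeAlgebra.ι (ZMod p) a) ∈ J)
    (lo : LinearOrder (FreeMonoid A))
    (hadm : ∀ u v₁ v₂ w : FreeMonoid A, lo.le v₁ v₂ →
      lo.le (u * v₁ * w) (u * v₂ * w))
    (IsTip : FreeMonoid A → Prop)
    (hTip : ∀ w, IsTip w ↔ φ (wordMonomial (ZMod p) w) ∈
      Submodule.span (ZMod p)
        ((fun v => φ (wordMonomial (ZMod p) v)) '' {v | lo.lt v w}))
    (IsMinTip : FreeMonoid A → Prop)
    (hMinTip : ∀ w, IsMinTip w ↔ IsTip w ∧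
      ∀ t u v : FreeMonoid A, w = u * t * v → ¬(u = 1 ∧ v = 1) → ¬ IsTip t)
    -- all words of length N map to zero
    (N : ℕ)
    (hN : ∀ w : FreeMonoid A, w.toList.length = N → φ (wordMonomial (ZMod p) w) = 0)
    -- ν(w): the unique k-linear combination of nontips with the same image as w
    (ν : FreeMonoid A → FreeAlgebra (ZMod p) A)
    (hν : ∀ w, IsMinTip w →
      ν w ∈ Submodule.span (ZMod p)
        ((fun v => wordMonomial (ZMod p) v) '' {v : FreeMonoid A | ¬ IsTip v}) ∧
      φ (ν w) = φ (wordMonomial (ZMod p) w)) :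
    TwoSidedIdeal.ker φ =
      TwoSidedIdeal.span
        (((fun w => wordMonomial (ZMod p) w - ν w) '' {w : FreeMonoid A | IsMinTip w}) ∪
         ((fun w => wordMonomial (ZMod p) w) ''
           {w : FreeMonoid A | w.toList.length = N})) := by
  classical
  haveI : Fact p.Prime := ⟨hp⟩
  letI : LinearOrder (FreeMonoid A) := lo
  set m : FreeMonoid A → FreeAlgebra (ZMod p) A := fun w => wordMonomial (ZMod p) w with hmdef
  have mmul : ∀ u v : FreeMonoid A, m (u * v) = m u * m v := fun u v =>
    map_mul (FreeMonoid.lift (FreeAlgebra.ι (ZMod p))) u v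
  set S : Set (FreeAlgebra (ZMod p) A) :=
    ((fun w => wordMonomial (ZMod p) w - ν w) '' {w : FreeMonoid A | IsMinTip w}) ∪
      ((fun w => wordMonomial (ZMod p) w) '' {w : FreeMonoid A | w.toList.length = N})
    with hSdef
  set I := TwoSidedIdeal.span S with hIdef
  -- splitting long words
  have hsplitw : ∀ w : FreeMonoid A, N ≤ w.toList.length →
      ∃ u v : FreeMonoid A, w = u * v ∧ u.toList.length = N := by
    intro w hw
    refine ⟨FreeMonoid.ofList (w.toList.take N), FreeMonoid.ofList (w.toList.drop N), ?_, ?_⟩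
    · apply FreeMonoid.toList.injective
      rw [FreeMonoid.toList_mul, FreeMonoid.toList_ofList, FreeMonoid.toList_ofList,
        List.take_append_drop]
    · rw [FreeMonoid.toList_ofList, List.length_take]
      omega
  have hφ0 : ∀ w : FreeMonoid A, N ≤ w.toList.length → φ (m w) = 0 := by
    intro w hw
    obtain ⟨u, v, rfl, hu⟩ := hsplitw w hw
    rw [mmul, map_mul, hN u hu, zero_mul]
  have hImem : ∀ w : FreeMonoid A, N ≤ w.toList.length → m w ∈ I := by
    intro w hw
    obtain ⟨u, v, rfl, hu⟩ := hsplitw w hw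
    rw [mmul]
    exact I.mul_mem_right _ _ (TwoSidedIdeal.subset_span (Or.inr ⟨u, hu, rfl⟩))
  -- finiteness / well-foundedness
  set S₀ : Set (FreeMonoid A) := {v : FreeMonoid A | v.toList.length < N} with hS₀def
  have hfin : S₀.Finite := by
    have : S₀ = FreeMonoid.toList ⁻¹' {l : List A | l.length < N} := rfl
    rw [this]
    exact (List.finite_length_lt A N).preimage (FreeMonoid.toList.injective.injOn)
  have hwf : S₀.WellFoundedOn (fun a b : FreeMonoid A => lo.lt a b) := hfin.wellFoundedOn
  -- independence of images of nontips (Claim E)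
  have hE : ∀ l : FreeMonoid A →₀ ZMod p, (∀ v ∈ l.support, ¬ IsTip v) →
      Finsupp.linearCombination (ZMod p) (fun v => φ (m v)) l = 0 → l = 0 := by
    intro l hnt h0
    by_contra hl
    have hne : l.support.Nonempty := Finsupp.support_nonempty_iff.mpr hl
    set w := l.support.max' hne with hwdef
    have hwmem : w ∈ l.support := l.support.max'_mem hne
    have hlw : l w ≠ 0 := Finsupp.mem_support_iff.mp hwmem
    have hsum : ∑ v ∈ l.support, l v • φ (m v) = 0 := by
      rwa [Finsupp.linearCombination_apply, Finsupp.sum] at h0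
    have h1 : l w • φ (m w) + ∑ v ∈ l.support.erase w, l v • φ (m v) = 0 := by
      rw [← Finset.add_sum_erase _ (fun v => l v • φ (m v)) hwmem] at hsum
      exact hsum
    have hspan : φ (m w) ∈ Submodule.span (ZMod p)
        ((fun v => φ (wordMonomial (ZMod p) v)) '' {v | lo.lt v w}) := by
      have hmem : -∑ v ∈ l.support.erase w, l v • φ (m v) ∈ Submodule.span (ZMod p)
          ((fun v => φ (wordMonomial (ZMod p) v)) '' {v | lo.lt v w}) := by
        refine neg_mem (Submodule.sum_mem _ fun v hv => Submodule.smul_mem _ _ ?_)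
        have hvne : v ≠ w := Finset.ne_of_mem_erase hv
        have hvmem : v ∈ l.support := Finset.mem_of_mem_erase hv
        have hvlt : lo.lt v w := lt_of_le_of_ne (Finset.le_max' _ _ hvmem) hvne
        exact Submodule.subset_span ⟨v, hvlt, rfl⟩
      have heq : φ (m w) = (l w)⁻¹ • (-∑ v ∈ l.support.erase w, l v • φ (m v)) := by
        rw [← eq_neg_of_add_eq_zero_left h1, smul_smul, inv_mul_cancel₀ hlw, one_smul]
      rw [heq]
      exact Submodule.smul_mem _ _ hmem
    exact hnt w hwmem ((hTip w).mpr hspan)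
  -- Claim C
  have hC : ∀ w : FreeMonoid A, φ (m w) ∈ Submodule.span (ZMod p)
      ((fun v => φ (wordMonomial (ZMod p) v)) '' {v | ¬ IsTip v ∧ lo.le v w}) := by
    intro w
    by_cases hlen : N ≤ w.toList.length
    · rw [hφ0 w hlen]; exact zero_mem _
    · have hw0 : w ∈ S₀ := not_le.mp hlen
      refine hwf.induction (P := fun w => φ (m w) ∈ Submodule.span (ZMod p)
        ((fun v => φ (wordMonomial (ZMod p) v)) '' {v | ¬ IsTip v ∧ lo.le v w})) hw0 ?_
      intro y hy IH
      by_cases hty : IsTip y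
      · have h1 := (hTip y).mp hty
        refine Submodule.span_le.mpr ?_ h1
        rintro _ ⟨v, hv, rfl⟩
        show φ (wordMonomial (ZMod p) v) ∈ _
        by_cases hvlen : N ≤ v.toList.length
        · rw [show φ (wordMonomial (ZMod p) v) = 0 from hφ0 v hvlen]; exact zero_mem _
        · refine Submodule.span_mono ?_ (IH v (not_le.mp hvlen) hv)
          rintro _ ⟨u, ⟨hu1, hu2⟩, rfl⟩
          exact ⟨u, ⟨hu1, le_trans hu2 (le_of_lt hv)⟩, rfl⟩
      · exact Submodule.subset_span ⟨y, ⟨hty, le_refl y⟩, rfl⟩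
  have hCtip : ∀ w : FreeMonoid A, IsTip w → φ (m w) ∈ Submodule.span (ZMod p)
      ((fun v => φ (wordMonomial (ZMod p) v)) '' {v | ¬ IsTip v ∧ lo.lt v w}) := by
    intro w htw
    refine Submodule.span_mono ?_ (hC w)
    rintro _ ⟨u, ⟨hu1, hu2⟩, rfl⟩
    refine ⟨u, ⟨hu1, lt_of_le_of_ne hu2 fun h => hu1 (h ▸ htw)⟩, rfl⟩
  -- support of ν t
  have hνspan : ∀ t : FreeMonoid A, IsMinTip t → ∃ l : FreeMonoid A →₀ ZMod p,
      (∀ v ∈ l.support, ¬ IsTip v ∧ lo.lt v t) ∧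
        Finsupp.linearCombination (ZMod p) m l = ν t := by
    intro t ht
    obtain ⟨l, hls, hl⟩ := (Finsupp.mem_span_image_iff_linearCombination _).mp (hν t ht).1
    obtain ⟨l', hls', hl'⟩ := (Finsupp.mem_span_image_iff_linearCombination _).mp
      (hCtip t ((hMinTip t).mp ht).1)
    have hφl : Finsupp.linearCombination (ZMod p) (fun v => φ (m v)) l = φ (ν t) := by
      rw [← hl]
      exact (Finsupp.apply_linearCombination (ZMod p) φ.toLinearMap m l).symm
    have h0 : Finsupp.linearCombination (ZMod p) (fun v => φ (m v)) (l - l') = 0 := by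
      rw [map_sub, hφl, hl', (hν t ht).2, sub_self]
    have hsupp : ∀ v ∈ (l - l').support, ¬ IsTip v := by
      intro v hv
      have := Finsupp.support_sub hv
      rcases Finset.mem_union.mp this with h | h
      · exact (Finsupp.mem_supported _ l).mp hls h
      · exact ((Finsupp.mem_supported _ l').mp hls' h).1
    have hll' : l = l' := sub_eq_zero.mp (hE _ hsupp h0)
    refine ⟨l, ?_, hl⟩
    intro v hv
    rw [hll'] at hv
    exact (Finsupp.mem_supported _ l').mp hls' hv
  -- every tip contains a minimal tip
  have hMinSub : ∀ w : FreeMonoid A, IsTip w →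
      ∃ u t v : FreeMonoid A, IsMinTip t ∧ w = u * t * v := by
    have key : ∀ n : ℕ, ∀ w : FreeMonoid A, w.toList.length < n → IsTip w →
        ∃ u t v : FreeMonoid A, IsMinTip t ∧ w = u * t * v := by
      intro n
      induction n with
      | zero => intro w h; exact absurd h (Nat.not_lt_zero _)
      | succ n IH =>
        intro w hw htip
        by_cases hmw : IsMinTip w
        · exact ⟨1, w, 1, hmw, by rw [one_mul, mul_one]⟩
        · rw [hMinTip] at hmw
          have hmw' := (not_and.mp hmw) htip
          push_neg at hmw'
          obtain ⟨t, u, v, heq, hne, htt⟩ := hmw'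
          have hlen : w.toList.length
              = u.toList.length + t.toList.length + v.toList.length := by
            rw [heq, FreeMonoid.toList_mul, FreeMonoid.toList_mul]
            simp [List.length_append]
            omega
          have hne' : u.toList.length ≠ 0 ∨ v.toList.length ≠ 0 := by
            by_contra hcc
            push_neg at hcc
            have hu1 : u = 1 := by
              apply FreeMonoid.toList.injective
              rw [FreeMonoid.toList_one]
              exact List.length_eq_zero_iff.mp hcc.1
            have hv1 : v = 1 := by
              apply FreeMonoid.toList.injective
              rw [FreeMonoid.toList_one]
              exact List.length_eq_zero_iff.mp hcc.2
            exact hne hu1 hv1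
          have htlt : t.toList.length < n := by omega
          obtain ⟨u', t', v', hmt, heq'⟩ := IH t htlt htt
          exact ⟨u * u', t', v' * v, hmt, by rw [heq, heq']; simp [mul_assoc]⟩
    exact fun w h => key (w.toList.length + 1) w (Nat.lt_succ_self _) h
  -- the two-sided ideal as a submodule
  set I' : Submodule (ZMod p) (FreeAlgebra (ZMod p) A) :=
    { carrier := {x | x ∈ I}
      add_mem' := fun hx hy => I.add_mem hx hy
      zero_mem' := I.zero_mem
      smul_mem' := fun c x hx => by
        simpa [Algebra.smul_def] using I.mul_mem_left (algebraMap (ZMod p) _ c) x hx }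
    with hI'def
  set Q : Submodule (ZMod p) (FreeAlgebra (ZMod p) A) :=
    I' ⊔ Submodule.span (ZMod p) (m '' {v | ¬ IsTip v}) with hQdef
  have hmemQ : ∀ w : FreeMonoid A, m w ∈ Q := by
    intro w
    by_cases hlen : N ≤ w.toList.length
    · exact Submodule.mem_sup_left (hImem w hlen)
    · have hw0 : w ∈ S₀ := not_le.mp hlen
      refine hwf.induction (P := fun w => m w ∈ Q) hw0 ?_
      intro y hy IH
      by_cases hty : IsTip y
      · obtain ⟨u, t, v, hmt, rfl⟩ := hMinSub y hty
        obtain ⟨l, hlsup, hlc⟩ := hνspan t hmt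
        have h1 : m u * (m t - ν t) * m v ∈ I :=
          I.mul_mem_right _ _ (I.mul_mem_left _ _
            (TwoSidedIdeal.subset_span (Or.inl ⟨t, hmt, rfl⟩)))
        have hsplit : m (u * t * v) = m u * (m t - ν t) * m v + m u * ν t * m v := by
          rw [mmul, mmul]; noncomm_ring
        rw [hsplit]
        refine Submodule.add_mem _ (Submodule.mem_sup_left h1) ?_
        rw [← hlc, Finsupp.linearCombination_apply, Finsupp.sum, Finset.mul_sum,
          Finset.sum_mul]
        refine Submodule.sum_mem _ ?_
        intro v' hv'
        have hrw : m u * (l v' • m v') * m v = l v' • m (u * v' * v) := by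
          rw [mmul, mmul, mul_smul_comm, smul_mul_assoc]
        rw [hrw]
        refine Submodule.smul_mem _ _ ?_
        obtain ⟨hv'nt, hv'lt⟩ := hlsup v' hv'
        by_cases hlen' : N ≤ (u * v' * v).toList.length
        · exact Submodule.mem_sup_left (hImem _ hlen')
        · refine IH _ (not_le.mp hlen') ?_
          have hle := hadm u v' t v (le_of_lt hv'lt)
          refine lt_of_le_of_ne hle ?_
          intro hcontra
          exact (ne_of_lt hv'lt) (mul_left_cancel (mul_right_cancel hcontra))
      · exact Submodule.mem_sup_right (Submodule.subset_span ⟨y, hty, rfl⟩)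
  -- monomials span the free algebra
  have hmulc : ∀ x ∈ Submodule.span (ZMod p) (Set.range m),
      ∀ y ∈ Submodule.span (ZMod p) (Set.range m),
        x * y ∈ Submodule.span (ZMod p) (Set.range m) := by
    intro x hx y hy
    have hxy := Submodule.mul_mem_mul hx hy
    rw [Submodule.span_mul_span] at hxy
    refine Submodule.span_le.mpr ?_ hxy
    rintro z ⟨_, ⟨a, rfl⟩, _, ⟨b, rfl⟩, rfl⟩
    exact Submodule.subset_span ⟨a * b, mmul a b⟩
  have hspanTop : ∀ x : FreeAlgebra (ZMod p) A,
      x ∈ Submodule.span (ZMod p) (Set.range m) := by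
    intro x
    induction x using FreeAlgebra.induction with
    | grade0 r =>
      rw [Algebra.algebraMap_eq_smul_one]
      refine Submodule.smul_mem _ _ (Submodule.subset_span ⟨1, ?_⟩)
      exact map_one (FreeMonoid.lift (FreeAlgebra.ι (ZMod p)))
    | grade1 a =>
      refine Submodule.subset_span ⟨FreeMonoid.of a, ?_⟩
      exact FreeMonoid.lift_eval_of (FreeAlgebra.ι (ZMod p)) a
    | mul a b ha hb => exact hmulc a ha b hb
    | add a b ha hb => exact Submodule.add_mem _ ha hb
  have hQall : ∀ x : FreeAlgebra (ZMod p) A, x ∈ Q := by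
    intro x
    refine Submodule.span_le.mpr ?_ (hspanTop x)
    rintro _ ⟨w, rfl⟩
    exact hmemQ w
  -- easy direction
  have hSker : S ⊆ (TwoSidedIdeal.ker φ : Set (FreeAlgebra (ZMod p) A)) := by
    rintro x (⟨w, hw, rfl⟩ | ⟨w, hw, rfl⟩)
    · rw [SetLike.mem_coe, TwoSidedIdeal.mem_ker, map_sub, (hν w hw).2, sub_self]
    · rw [SetLike.mem_coe, TwoSidedIdeal.mem_ker]
      exact hN w hw
  have hIker : ∀ x, x ∈ I → φ x = 0 := by
    intro x hx
    exact (TwoSidedIdeal.mem_ker φ).mp (TwoSidedIdeal.mem_span_iff.mp hx (TwoSidedIdeal.ker φ) hSker)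
  refine le_antisymm ?_ ?_
  · -- ker ≤ span
    intro x hx
    obtain ⟨i, hi, y, hy, rfl⟩ := Submodule.mem_sup.mp (hQall x)
    have hφi : φ i = 0 := hIker i hi
    have hφy : φ y = 0 := by
      have hx0 := (TwoSidedIdeal.mem_ker φ).mp hx
      rw [map_add, hφi, zero_add] at hx0
      exact hx0
    obtain ⟨l, hls, rfl⟩ := (Finsupp.mem_span_image_iff_linearCombination _).mp hy
    have hl0 : l = 0 := by
      refine hE l (fun v hv => (Finsupp.mem_supported _ l).mp hls hv) ?_
      have happ : (Finsupp.linearCombination (ZMod p) fun v => φ (m v)) l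
          = φ (Finsupp.linearCombination (ZMod p) m l) :=
        (Finsupp.apply_linearCombination (ZMod p) φ.toLinearMap m l).symm
      rw [happ]
      exact hφy
    rw [hl0, map_zero, add_zero]
    exact hi
  · -- span ≤ ker
    intro x hx
    exact TwoSidedIdeal.mem_span_iff.mp hx (TwoSidedIdeal.ker φ) hSker
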